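/- Expectation of a product of two Wick monomials reproduces a cumulant: for a nonempty sequence I and a single index j, E[ :y^I: · :y_j: ] = E[ :y^I: · y_j ] = κ[y_{I+(j)}], the joint cumulant of the variables in I together with y_j. -/

import Mathlib

open MeasureTheory Finset

/-- The moment `E[y^A]` of the labeled family `(y i)_{i ∈ A}`. -/
noncomputable def mom {Ω : Type*} [MeasurableSpace Ω] {ι : Type*}
    (μ : Measure Ω) (y : ι → Ω → ℝ) (A : Finset ι) : ℝ :=
  ∫ ω, ∏ i ∈ A, y i ω ∂μ

open scoped Classical in
/-- Set partitions of a finite (label) set `A`: finsets of nonempty pairwise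
disjoint blocks whose union is `A`. -/
noncomputable def partitionsOf {ι : Type*} (A : Finset ι) : Finset (Finset (Finset ι)) :=
  A.powerset.powerset.filter fun π =>
    (∀ B ∈ π, B.Nonempty) ∧ (∀ B ∈ π, ∀ C ∈ π, B ≠ C → Disjoint B C) ∧ π.sup id = A

/-- The joint cumulant `κ[y_A]`, defined by the (Möbius-inverted form of the)
moments-to-cumulants recursion. -/
noncomputable def cum {Ω : Type*} [MeasurableSpace Ω] {ι : Type*}
    (μ : Measure Ω) (y : ι → Ω → ℝ) (A : Finset ι) : ℝ :=
  ∑ π ∈ partitionsOf A,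
    (-1 : ℝ) ^ (π.card - 1) * (Nat.factorial (π.card - 1)) * ∏ B ∈ π, mom μ y B

/-- The Wick polynomial `:y^I:` defined by the recursion
`:y^I: = y^I − Σ_{∅≠E⊆I} E[y^E]·:y^{I∖E}:`, with `:y^∅: = 1`. -/
noncomputable def wick {Ω : Type*} [MeasurableSpace Ω] {ι : Type*} [DecidableEq ι]
    (μ : Measure Ω) (y : ι → Ω → ℝ) (I : Finset ι) : Ω → ℝ :=
  fun ω => (∏ i ∈ I, y i ω) -
    ∑ E ∈ (I.powerset.filter fun E => E ≠ ∅).attach,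
      mom μ y E.1 * wick μ y (I \ E.1) ω
termination_by I.card
decreasing_by
  have h := E.2
  simp only [Finset.mem_filter, Finset.mem_powerset] at h
  exact Finset.card_lt_card (Finset.sdiff_ssubset h.1 (Finset.nonempty_iff_ne_empty.mpr h.2))

/-! ### Combinatorial lemmas about set partitions -/

section Combinatorics

variable {ι : Type*} [DecidableEq ι]

lemma partitionsOf_eq (A : Finset ι) :
    partitionsOf A = A.powerset.powerset.filter fun π =>
      (∀ B ∈ π, B.Nonempty) ∧ (∀ B ∈ π, ∀ C ∈ π, B ≠ C → Disjoint B C) ∧ π.sup id = A := by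
  unfold partitionsOf
  congr!

lemma mem_partitionsOf {A : Finset ι} {π : Finset (Finset ι)} :
    π ∈ partitionsOf A ↔ (∀ B ∈ π, B.Nonempty) ∧
      (∀ B ∈ π, ∀ C ∈ π, B ≠ C → Disjoint B C) ∧ π.sup id = A := by
  rw [partitionsOf_eq, Finset.mem_filter, Finset.mem_powerset, and_iff_right_iff_imp]
  rintro ⟨h1, h2, h3⟩ B hB
  rw [Finset.mem_powerset, ← h3]
  exact Finset.le_sup (f := id) hB

lemma sup_erase_of_pairwise {π : Finset (Finset ι)}
    (hd : ∀ B ∈ π, ∀ C ∈ π, B ≠ C → Disjoint B C) {E : Finset ι} (hE : E ∈ π) :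
    (π.erase E).sup id = π.sup id \ E := by
  ext x
  simp only [Finset.mem_sup, Finset.mem_erase, Finset.mem_sdiff, id_eq]
  constructor
  · rintro ⟨B, ⟨hBE, hB⟩, hx⟩
    exact ⟨⟨B, hB, hx⟩, fun hxE => Finset.notMem_empty x (by simpa using (hd B hB E hE hBE).le_bot (by simp [hx, hxE] : x ∈ B ⊓ E))⟩
  · rintro ⟨⟨B, hB, hx⟩, hxE⟩
    exact ⟨B, ⟨fun h => hxE (h ▸ hx), hB⟩, hx⟩

lemma empty_not_mem_partition {A : Finset ι} {π : Finset (Finset ι)}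
    (hπ : π ∈ partitionsOf A) : (∅ : Finset ι) ∉ π := fun h =>
  (by simpa using (mem_partitionsOf.mp hπ).1 ∅ h)

lemma partitionsOf_erase {A : Finset ι} {π : Finset (Finset ι)}
    (hπ : π ∈ partitionsOf A) {E : Finset ι} (hE : E ∈ π) :
    π.erase E ∈ partitionsOf (A \ E) := by
  obtain ⟨h1, h2, h3⟩ := mem_partitionsOf.mp hπ
  refine mem_partitionsOf.mpr ⟨fun B hB => h1 B (Finset.mem_of_mem_erase hB),
    fun B hB C hC hBC => h2 B (Finset.mem_of_mem_erase hB) C (Finset.mem_of_mem_erase hC) hBC, ?_⟩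
  rw [sup_erase_of_pairwise h2 hE, h3]

lemma partitionsOf_insert {A E : Finset ι} (hEA : E ⊆ A) (hEne : E.Nonempty)
    {σ : Finset (Finset ι)} (hσ : σ ∈ partitionsOf (A \ E)) :
    insert E σ ∈ partitionsOf A := by
  obtain ⟨h1, h2, h3⟩ := mem_partitionsOf.mp hσ
  have hdisj : ∀ B ∈ σ, Disjoint B E := by
    intro B hB
    have : B ⊆ A \ E := by rw [← h3]; exact Finset.le_sup (f := id) hB
    exact Finset.disjoint_left.mpr fun x hxB hxE => (Finset.mem_sdiff.mp (this hxB)).2 hxE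
  refine mem_partitionsOf.mpr ⟨?_, ?_, ?_⟩
  · intro B hB
    rcases Finset.mem_insert.mp hB with h | h
    · exact h ▸ hEne
    · exact h1 B h
  · intro B hB C hC hBC
    rcases Finset.mem_insert.mp hB with h | h <;> rcases Finset.mem_insert.mp hC with h' | h'
    · exact absurd (h.trans h'.symm) hBC
    · exact h ▸ (hdisj C h').symm
    · exact h' ▸ hdisj B h
    · exact h2 B h C h' hBC
  · rw [Finset.sup_insert, h3]
    simpa using Finset.union_sdiff_of_subset hEA

lemma not_mem_of_partition_sdiff {A E : Finset ι} (hEne : E.Nonempty)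
    {σ : Finset (Finset ι)} (hσ : σ ∈ partitionsOf (A \ E)) : E ∉ σ := by
  intro h
  have h3 := (mem_partitionsOf.mp hσ).2.2
  have hsub : E ⊆ A \ E := by rw [← h3]; exact Finset.le_sup (f := id) h
  obtain ⟨x, hx⟩ := hEne
  exact (Finset.mem_sdiff.mp (hsub hx)).2 hx

lemma card_filter_not_mem {A : Finset ι} {π : Finset (Finset ι)}
    (hπ : π ∈ partitionsOf A) {j : ι} (hjA : j ∈ A) :
    (π.filter fun B => j ∉ B).card = π.card - 1 := by
  obtain ⟨h1, h2, h3⟩ := mem_partitionsOf.mp hπ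
  obtain ⟨B₀, hB₀, hjB₀⟩ : ∃ B ∈ π, j ∈ B := by
    have : j ∈ π.sup id := h3 ▸ hjA
    simpa using Finset.mem_sup.mp this
  have hone : π.filter (fun B => j ∈ B) = {B₀} := by
    ext C
    simp only [Finset.mem_filter, Finset.mem_singleton]
    constructor
    · rintro ⟨hC, hjC⟩
      by_contra hne
      exact Finset.notMem_empty j (by simpa using (h2 C hC B₀ hB₀ hne).le_bot (by simp [hjC, hjB₀] : j ∈ C ⊓ B₀))
    · rintro rfl; exact ⟨hB₀, hjB₀⟩
  have := Finset.card_filter_add_card_filter_not (s := π) (p := fun B => j ∈ B)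
  rw [hone] at this
  simp only [Finset.card_singleton] at this
  omega

/-- weight of a partition -/
noncomputable def W (m : Finset ι → ℝ) (σ : Finset (Finset ι)) : ℝ :=
  (-1 : ℝ) ^ (σ.card - 1) * (Nat.factorial (σ.card - 1)) * ∏ B ∈ σ, m B

noncomputable def cumW (m : Finset ι → ℝ) (A : Finset ι) : ℝ :=
  ∑ π ∈ partitionsOf A, W m π

lemma singleton_mem_partitionsOf {A : Finset ι} (hA : A.Nonempty) :
    ({A} : Finset (Finset ι)) ∈ partitionsOf A := by
  refine mem_partitionsOf.mpr ⟨?_, ?_, ?_⟩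
  · intro B hB; rw [Finset.mem_singleton] at hB; exact hB ▸ hA
  · intro B hB C hC hBC
    rw [Finset.mem_singleton] at hB hC
    exact absurd (hB.trans hC.symm) hBC
  · simp

lemma partition_card_one {A : Finset ι} {π : Finset (Finset ι)}
    (hπ : π ∈ partitionsOf A) (h : π.card = 1) : π = {A} := by
  obtain ⟨B, rfl⟩ := Finset.card_eq_one.mp h
  have := (mem_partitionsOf.mp hπ).2.2
  simp only [Finset.sup_singleton, id_eq] at this
  rw [this]

lemma partition_card_pos {A : Finset ι} (hA : A.Nonempty) {π : Finset (Finset ι)}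
    (hπ : π ∈ partitionsOf A) : 0 < π.card := by
  rcases Finset.eq_empty_or_nonempty π with rfl | h
  · have := (mem_partitionsOf.mp hπ).2.2
    simp only [Finset.sup_empty] at this
    exact absurd this.symm (Finset.nonempty_iff_ne_empty.mp hA)
  · exact Finset.card_pos.mpr h

lemma star (m : Finset ι → ℝ) (hm : m ∅ = 1) (I : Finset ι) (j : ι) (hj : j ∉ I) :
    m (insert j I) = ∑ E ∈ I.powerset, m E * cumW m ((insert j I) \ E) := by
  set A := insert j I with hA
  have hjA : j ∈ A := Finset.mem_insert_self j I
  have hAne : A.Nonempty := ⟨j, hjA⟩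
  -- rewrite RHS as a sum over a sigma set
  have step1 : ∑ E ∈ I.powerset, m E * cumW m (A \ E)
      = ∑ p ∈ I.powerset.sigma (fun E => partitionsOf (A \ E)), m p.1 * W m p.2 := by
    simp only [cumW, Finset.mul_sum]
    exact Finset.sum_sigma' _ _ (fun E σ => m E * W m σ)
  -- the bijection
  have step2 : ∑ p ∈ I.powerset.sigma (fun E => partitionsOf (A \ E)), m p.1 * W m p.2
      = ∑ q ∈ (partitionsOf A).sigma (fun π => insert ∅ (π.filter fun B => j ∉ B)),
          m q.2 * W m (q.1.erase q.2) := by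
    refine Finset.sum_nbij' (fun p => ⟨if p.1 = ∅ then p.2 else insert p.1 p.2, p.1⟩)
      (fun q => ⟨q.2, q.1.erase q.2⟩) ?_ ?_ ?_ ?_ ?_
    · rintro ⟨E, σ⟩ hp
      rw [Finset.mem_sigma] at hp
      obtain ⟨hE, hσ⟩ := hp
      rw [Finset.mem_powerset] at hE
      rw [Finset.mem_sigma]
      by_cases hne : E = ∅
      · subst hne
        simp only [if_pos rfl]
        constructor
        · simpa using hσ
        · exact Finset.mem_insert_self _ _
      · have hEne : E.Nonempty := Finset.nonempty_iff_ne_empty.mpr hne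
        have hEA : E ⊆ A := hE.trans (Finset.subset_insert j I)
        simp only [if_neg hne]
        refine ⟨partitionsOf_insert hEA hEne hσ, ?_⟩
        refine Finset.mem_insert_of_mem (Finset.mem_filter.mpr ⟨Finset.mem_insert_self _ _, ?_⟩)
        exact fun hjE => hj (hE hjE)
    · rintro ⟨π, E⟩ hq
      rw [Finset.mem_sigma] at hq
      obtain ⟨hπ, hE⟩ := hq
      dsimp only at hπ hE ⊢
      rw [Finset.mem_sigma, Finset.mem_powerset]
      dsimp only
      rcases Finset.mem_insert.mp hE with rfl | hE
      · refine ⟨Finset.empty_subset _, ?_⟩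
        rw [Finset.erase_eq_of_notMem (empty_not_mem_partition hπ)]
        simpa using hπ
      · obtain ⟨hEπ, hjE⟩ := Finset.mem_filter.mp hE
        have hEA : E ⊆ A := by
          rw [← (mem_partitionsOf.mp hπ).2.2]
          exact Finset.le_sup (f := id) hEπ
        refine ⟨fun x hx => ?_, partitionsOf_erase hπ hEπ⟩
        · rcases Finset.mem_insert.mp (hEA hx) with rfl | h
          · exact absurd hx hjE
          · exact h
    · rintro ⟨E, σ⟩ hp
      rw [Finset.mem_sigma, Finset.mem_powerset] at hp
      obtain ⟨hE, hσ⟩ := hp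
      dsimp only at hE hσ ⊢
      by_cases hne : E = ∅
      · subst hne
        have h0 : A \ (∅ : Finset ι) = A := by simp
        rw [if_pos rfl, Finset.erase_eq_of_notMem (empty_not_mem_partition (h0 ▸ hσ))]
      · have hEne : E.Nonempty := Finset.nonempty_iff_ne_empty.mpr hne
        rw [if_neg hne, Finset.erase_insert (not_mem_of_partition_sdiff hEne hσ)]
    · rintro ⟨π, E⟩ hq
      rw [Finset.mem_sigma] at hq
      obtain ⟨hπ, hE⟩ := hq
      dsimp only at hπ hE ⊢
      rcases Finset.mem_insert.mp hE with rfl | hE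
      · rw [Finset.erase_eq_of_notMem (empty_not_mem_partition hπ), if_pos rfl]
      · obtain ⟨hEπ, hjE⟩ := Finset.mem_filter.mp hE
        have hne : E ≠ ∅ := Finset.nonempty_iff_ne_empty.mp ((mem_partitionsOf.mp hπ).1 E hEπ)
        rw [if_neg hne, Finset.insert_erase hEπ]
    · rintro ⟨E, σ⟩ hp
      rw [Finset.mem_sigma, Finset.mem_powerset] at hp
      obtain ⟨hE, hσ⟩ := hp
      dsimp only at hE hσ ⊢
      by_cases hne : E = ∅
      · subst hne
        have h0 : A \ (∅ : Finset ι) = A := by simp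
        rw [if_pos rfl, Finset.erase_eq_of_notMem (empty_not_mem_partition (h0 ▸ hσ))]
      · have hEne : E.Nonempty := Finset.nonempty_iff_ne_empty.mpr hne
        rw [if_neg hne, Finset.erase_insert (not_mem_of_partition_sdiff hEne hσ)]
  -- back to a double sum and evaluate
  have step3 : ∑ q ∈ (partitionsOf A).sigma (fun π => insert ∅ (π.filter fun B => j ∉ B)),
          m q.2 * W m (q.1.erase q.2)
      = ∑ π ∈ partitionsOf A, ∑ E ∈ insert ∅ (π.filter fun B => j ∉ B),
          m E * W m (π.erase E) :=
    (Finset.sum_sigma' (partitionsOf A) _ (fun π E => m E * W m (π.erase E))).symm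
  rw [step1, step2, step3]
  rw [Finset.sum_eq_single_of_mem {A} (singleton_mem_partitionsOf hAne) ?h0]
  case h0 =>
    intro π hπ hne
    have hk2 : 2 ≤ π.card := by
      have h1 := partition_card_pos hAne hπ
      by_contra h
      push_neg at h
      have h2 : π.card = 1 := by omega
      exact hne (partition_card_one hπ h2)
    have hfilternot : (∅ : Finset ι) ∉ π.filter fun B => j ∉ B := by
      intro h
      exact empty_not_mem_partition hπ (Finset.mem_filter.mp h).1
    rw [Finset.sum_insert hfilternot]
    rw [Finset.erase_eq_of_notMem (empty_not_mem_partition hπ), hm, one_mul]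
    have hterm : ∀ E ∈ π.filter fun B => j ∉ B,
        m E * W m (π.erase E)
          = (-1 : ℝ) ^ (π.card - 2) * ((π.card - 2).factorial) * ∏ B ∈ π, m B := by
      intro E hE
      obtain ⟨hEπ, _⟩ := Finset.mem_filter.mp hE
      unfold W
      rw [Finset.card_erase_of_mem hEπ, show π.card - 1 - 1 = π.card - 2 from by omega]
      rw [show m E * ((-1:ℝ) ^ (π.card - 2) * ((π.card - 2).factorial) * ∏ B ∈ π.erase E, m B)
        = (-1:ℝ) ^ (π.card - 2) * ((π.card - 2).factorial) * (m E * ∏ B ∈ π.erase E, m B) from by ring]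
      rw [Finset.mul_prod_erase _ _ hEπ]
    rw [Finset.sum_congr rfl hterm, Finset.sum_const, card_filter_not_mem hπ hjA,
      nsmul_eq_mul]
    unfold W
    obtain ⟨n, hn⟩ : ∃ n, π.card = n + 2 := ⟨π.card - 2, by omega⟩
    rw [hn]
    simp only [Nat.add_sub_cancel, show n + 2 - 1 = n + 1 from by omega]
    rw [Nat.cast_add, Nat.cast_one, Nat.factorial_succ]
    push_cast
    ring
  · -- value at {A}
    have hfilter : ({A} : Finset (Finset ι)).filter (fun B => j ∉ B) = ∅ := by
      rw [Finset.filter_eq_empty_iff]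
      intro B hB
      rw [Finset.mem_singleton] at hB
      subst hB
      simp [hjA]
    rw [hfilter]
    simp only [insert_empty_eq, Finset.sum_singleton]
    rw [Finset.erase_eq_of_notMem (by
      simp only [Finset.mem_singleton]
      exact fun h => hAne.ne_empty h.symm : (∅:Finset ι) ∉ ({A} : Finset (Finset ι))), hm, one_mul]
    unfold W
    simp

end Combinatorics

/-! ### Analytic lemmas -/

section Analytic

variable {Ω : Type*} [MeasurableSpace Ω] {ι : Type*} [DecidableEq ι] {μ : Measure Ω} {y : ι → Ω → ℝ}

lemma cum_eq_cumW (A : Finset ι) : cum μ y A = cumW (mom μ y) A := rfl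

lemma wick_empty (ω : Ω) : wick μ y (∅ : Finset ι) ω = 1 := by
  rw [wick]
  have h0 : ((∅ : Finset ι).powerset.filter fun E => E ≠ ∅) = ∅ := by
    rw [Finset.filter_eq_empty_iff]
    intro E hE
    simp only [Finset.powerset_empty, Finset.mem_singleton] at hE
    simp [hE]
  rw [h0]
  simp

lemma mom_empty [IsProbabilityMeasure μ] : mom μ y (∅ : Finset ι) = 1 := by simp [mom]

lemma wick_integrable (I : Finset ι) :
    (∀ A ⊆ I, Integrable (fun ω => ∏ i ∈ A, y i ω) μ) → Integrable (wick μ y I) μ := by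
  induction I using Finset.strongInduction with
  | _ I ih =>
    intro h
    have : wick μ y I = fun ω => (∏ i ∈ I, y i ω) -
        ∑ E ∈ (I.powerset.filter fun E => E ≠ ∅).attach,
          mom μ y E.1 * wick μ y (I \ E.1) ω := by
      funext ω; rw [wick]
    rw [this]
    refine Integrable.sub (h I subset_rfl) (integrable_finset_sum _ ?_)
    rintro ⟨E, hE⟩ -
    simp only [Finset.mem_filter, Finset.mem_powerset] at hE
    exact (ih (I \ E) (Finset.sdiff_ssubset hE.1 (Finset.nonempty_iff_ne_empty.mpr hE.2))
      (fun A hA => h A (hA.trans Finset.sdiff_subset))).const_mul _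

lemma wick_mul_key (I : Finset ι) {j : ι} (hj : j ∉ I) (ω : Ω) :
    wick μ y I ω * y j ω = (∏ i ∈ insert j I, y i ω) -
      ∑ E ∈ (I.powerset.filter fun E => E ≠ ∅).attach,
        mom μ y E.1 * (wick μ y (I \ E.1) ω * y j ω) := by
  rw [wick, Finset.prod_insert hj, sub_mul, Finset.sum_mul]
  congr 1
  · ring
  · exact Finset.sum_congr rfl fun E _ => by ring

lemma wick_mul_integrable (I : Finset ι) {j : ι} :
    j ∉ I → (∀ A ⊆ insert j I, Integrable (fun ω => ∏ i ∈ A, y i ω) μ) →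
      Integrable (fun ω => wick μ y I ω * y j ω) μ := by
  induction I using Finset.strongInduction with
  | _ I ih =>
    intro hj h
    simp only [wick_mul_key I hj]
    refine Integrable.sub (h _ subset_rfl) (integrable_finset_sum _ ?_)
    rintro ⟨E, hE⟩ -
    simp only [Finset.mem_filter, Finset.mem_powerset] at hE
    refine (ih (I \ E) (Finset.sdiff_ssubset hE.1 (Finset.nonempty_iff_ne_empty.mpr hE.2))
      (fun hx => hj (Finset.mem_sdiff.mp hx).1) (fun A hA => h A ?_)).const_mul _
    intro x hx
    rcases Finset.mem_insert.mp (hA hx) with rfl | hxm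
    · exact Finset.mem_insert_self _ _
    · exact Finset.mem_insert_of_mem (Finset.mem_sdiff.mp hxm).1

lemma integral_wick_eq_zero [IsProbabilityMeasure μ] (I : Finset ι) :
    I.Nonempty → (∀ A ⊆ I, Integrable (fun ω => ∏ i ∈ A, y i ω) μ) →
      ∫ ω, wick μ y I ω ∂μ = 0 := by
  induction I using Finset.strongInduction with
  | _ I ih =>
    intro hne h
    have hrw : ∀ ω, wick μ y I ω = (∏ i ∈ I, y i ω) -
        ∑ E ∈ (I.powerset.filter fun E => E ≠ ∅).attach,
          mom μ y E.1 * wick μ y (I \ E.1) ω := fun ω => by rw [wick]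
    have hintE : ∀ E ∈ (I.powerset.filter fun E => E ≠ ∅).attach,
        Integrable (fun ω => mom μ y E.1 * wick μ y (I \ E.1) ω) μ := by
      rintro ⟨E, hE⟩ -
      simp only [Finset.mem_filter, Finset.mem_powerset] at hE
      exact (wick_integrable (I \ E) (fun A hA => h A (hA.trans Finset.sdiff_subset))).const_mul _
    simp only [hrw]
    rw [integral_sub (h I subset_rfl) (integrable_finset_sum _ hintE),
      integral_finset_sum _ hintE]
    simp only [integral_const_mul]
    rw [Finset.sum_attach (I.powerset.filter fun E => E ≠ ∅)
      (fun E => mom μ y E * ∫ ω, wick μ y (I \ E) ω ∂μ)]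
    rw [Finset.sum_eq_single_of_mem I (by
      simp only [Finset.mem_filter, Finset.mem_powerset]
      exact ⟨subset_rfl, Finset.nonempty_iff_ne_empty.mp hne⟩) ?_]
    · rw [Finset.sdiff_self]
      simp only [wick_empty]
      simp [mom]
    · intro E hE hEne
      simp only [Finset.mem_filter, Finset.mem_powerset] at hE
      rw [ih (I \ E) (Finset.sdiff_ssubset hE.1 (Finset.nonempty_iff_ne_empty.mpr hE.2))
        (Finset.sdiff_nonempty.mpr fun hsub => hEne (Finset.Subset.antisymm hE.1 hsub))
        (fun A hA => h A (hA.trans Finset.sdiff_subset)), mul_zero]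

lemma integral_wick_mul [IsProbabilityMeasure μ] (I : Finset ι) {j : ι} :
    j ∉ I → (∀ A ⊆ insert j I, Integrable (fun ω => ∏ i ∈ A, y i ω) μ) →
      ∫ ω, wick μ y I ω * y j ω ∂μ = cum μ y (insert j I) := by
  induction I using Finset.strongInduction with
  | _ I ih =>
    intro hj h
    have hsubset : ∀ E : Finset ι, ∀ A ⊆ insert j (I \ E), A ⊆ insert j I := by
      intro E A hA x hx
      rcases Finset.mem_insert.mp (hA hx) with rfl | hxm
      · exact Finset.mem_insert_self _ _
      · exact Finset.mem_insert_of_mem (Finset.mem_sdiff.mp hxm).1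
    simp only [wick_mul_key I hj]
    have hintE : ∀ E ∈ (I.powerset.filter fun E => E ≠ ∅).attach,
        Integrable (fun ω => mom μ y E.1 * (wick μ y (I \ E.1) ω * y j ω)) μ := by
      rintro ⟨E, hE⟩ -
      exact (wick_mul_integrable (I \ E) (fun hx => hj (Finset.mem_sdiff.mp hx).1)
        (fun A hA => h A (hsubset E A hA))).const_mul _
    rw [integral_sub (h _ subset_rfl) (integrable_finset_sum _ hintE),
      integral_finset_sum _ hintE]
    simp only [integral_const_mul]
    rw [Finset.sum_attach (I.powerset.filter fun E => E ≠ ∅)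
      (fun E => mom μ y E * ∫ ω, wick μ y (I \ E) ω * y j ω ∂μ)]
    have hIH : ∀ E ∈ I.powerset.filter (fun E => E ≠ ∅),
        mom μ y E * ∫ ω, wick μ y (I \ E) ω * y j ω ∂μ
          = mom μ y E * cum μ y (insert j (I \ E)) := by
      intro E hE
      simp only [Finset.mem_filter, Finset.mem_powerset] at hE
      rw [ih (I \ E) (Finset.sdiff_ssubset hE.1 (Finset.nonempty_iff_ne_empty.mpr hE.2))
        (fun hx => hj (Finset.mem_sdiff.mp hx).1) (fun A hA => h A (hsubset E A hA))]
    rw [Finset.sum_congr rfl hIH]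
    -- use the combinatorial recursion
    have hstar := star (mom μ y) mom_empty I j hj
    have hpow : I.powerset = insert ∅ (I.powerset.filter fun E => E ≠ ∅) := by
      ext E
      simp only [Finset.mem_insert, Finset.mem_filter, Finset.mem_powerset, ne_eq]
      constructor
      · intro hsub
        by_cases h0 : E = ∅
        · exact Or.inl h0
        · exact Or.inr ⟨hsub, h0⟩
      · rintro (rfl | ⟨hsub, -⟩)
        · exact Finset.empty_subset _
        · exact hsub
    have hnot : (∅ : Finset ι) ∉ I.powerset.filter fun E => E ≠ ∅ := by
      simp
    rw [hpow, Finset.sum_insert hnot, mom_empty, one_mul, Finset.sdiff_empty,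
      ← cum_eq_cumW] at hstar
    have hsd : ∀ E ∈ I.powerset.filter (fun E => E ≠ ∅),
        mom μ y E * cumW (mom μ y) ((insert j I) \ E)
          = mom μ y E * cum μ y (insert j (I \ E)) := by
      intro E hE
      simp only [Finset.mem_filter, Finset.mem_powerset] at hE
      rw [Finset.insert_sdiff_of_notMem _ (fun hjE => hj (hE.1 hjE)), ← cum_eq_cumW]
    rw [Finset.sum_congr rfl hsd] at hstar
    have hmomA : (∫ ω, ∏ i ∈ insert j I, y i ω ∂μ) = mom μ y (insert j I) := rfl
    rw [hmomA]
    linarith [hstar]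

end Analytic

/-- `E[:y^I:·:y_j:] = E[:y^I:·y_j] = κ[y_{I+(j)}]`. -/
theorem wick_pair_cumulant {Ω : Type*} [MeasurableSpace Ω] {ι : Type*} [DecidableEq ι]
    (μ : Measure Ω) [IsProbabilityMeasure μ] (y : ι → Ω → ℝ)
    (I : Finset ι) (hI : I.Nonempty) (j : ι) (hj : j ∉ I)
    (hint : ∀ A ⊆ insert j I, Integrable (fun ω => ∏ i ∈ A, y i ω) μ) :
    (∫ ω, wick μ y I ω * wick μ y {j} ω ∂μ) = cum μ y (insert j I) ∧
    (∫ ω, wick μ y I ω * y j ω ∂μ) = cum μ y (insert j I) := by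
  have hmain : (∫ ω, wick μ y I ω * y j ω ∂μ) = cum μ y (insert j I) :=
    integral_wick_mul I hj hint
  have hintI : ∀ A ⊆ I, Integrable (fun ω => ∏ i ∈ A, y i ω) μ :=
    fun A hA => hint A (hA.trans (Finset.subset_insert j I))
  refine ⟨?_, hmain⟩
  have hwj : ∀ ω, wick μ y ({j} : Finset ι) ω = y j ω - mom μ y {j} := by
    intro ω
    rw [wick]
    have hfil : (({j} : Finset ι).powerset.filter fun E => E ≠ ∅) = {{j}} := by
      ext E
      simp only [Finset.mem_filter, Finset.mem_powerset, Finset.mem_singleton, ne_eq,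
        Finset.subset_singleton_iff]
      constructor
      · rintro ⟨rfl | rfl, hne⟩
        · exact absurd rfl hne
        · rfl
      · rintro rfl
        exact ⟨Or.inr rfl, Finset.singleton_ne_empty j⟩
    rw [Finset.prod_singleton]
    congr 1
    rw [Finset.sum_attach (({j} : Finset ι).powerset.filter fun E => E ≠ ∅)
      (fun E => mom μ y E * wick μ y ({j} \ E) ω), hfil, Finset.sum_singleton,
      Finset.sdiff_self, wick_empty, mul_one]
  have heq : ∀ ω, wick μ y I ω * wick μ y ({j} : Finset ι) ω
      = wick μ y I ω * y j ω - mom μ y {j} * wick μ y I ω := by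
    intro ω
    rw [hwj ω]
    ring
  simp only [heq]
  rw [integral_sub (wick_mul_integrable I hj hint)
    ((wick_integrable I hintI).const_mul _), integral_const_mul,
    integral_wick_eq_zero I hI hintI, mul_zero, sub_zero, hmain]
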